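/- Cascaded prescribed-time stability (two subsystems): Suppose x₂ : [0,t_f) → ℝⁿ satisfies ‖x₂(t)‖ ≤ C₂/μ₂(t) and x₁ : [0,t_f) → ℝᵐ is differentiable with V₁(t) = μ₁(t)²‖x₁(t)‖² satisfying V₁'(t) ≤ −2k₁μ₁(t)V₁(t) + 2μ₁(t)²c‖x₁(t)‖‖x₂(t)‖, where μᵢ(t) = τ(t)^{hᵢ}, τ(t) = 1 + ln(t_f/(t_f−t)), k₁ > 0, c > 0, C₂ ≥ 0, and h₂ > h₁ > 1. Then ‖x₁(t)‖ → 0 as t → t_f⁻. -/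
import Mathlib


open Set Filter Topology Real

theorem cascaded_prescribed_time_stability (t_f k₁ c C₂ h₁ h₂ : ℝ)
    (ht : 0 < t_f) (hk₁ : 0 < k₁) (hc : 0 < c) (hC₂ : 0 ≤ C₂)
    (hh₁ : 1 < h₁) (hh : h₁ < h₂) (n m : ℕ)
    (τ μ₁ μ₂ : ℝ → ℝ)
    (hτ : ∀ t, τ t = 1 + Real.log (t_f / (t_f - t)))
    (hμ₁ : ∀ t, μ₁ t = τ t ^ h₁) (hμ₂ : ∀ t, μ₂ t = τ t ^ h₂)
    (x₁ : ℝ → EuclideanSpace ℝ (Fin m))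
    (x₂ : ℝ → EuclideanSpace ℝ (Fin n))
    (hx₂ : ∀ t ∈ Ico (0:ℝ) t_f, ‖x₂ t‖ ≤ C₂ / μ₂ t)
    (hx₁ : ∀ t ∈ Ico (0:ℝ) t_f, DifferentiableAt ℝ x₁ t)
    (V₁ V₁' : ℝ → ℝ)
    (hV₁ : ∀ t, V₁ t = μ₁ t ^ 2 * ‖x₁ t‖ ^ 2)
    (hV₁' : ∀ t ∈ Ico (0:ℝ) t_f, HasDerivAt V₁ (V₁' t) t)
    (hineq : ∀ t ∈ Ico (0:ℝ) t_f,
      V₁' t ≤ -2 * k₁ * μ₁ t * V₁ t +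
        2 * μ₁ t ^ 2 * c * ‖x₁ t‖ * ‖x₂ t‖) :
    Tendsto (fun t => ‖x₁ t‖) (𝓝[<] t_f) (𝓝 0) := by
  -- basic facts about τ and μ on [0, t_f)
  have hτ1 : ∀ t ∈ Ico (0:ℝ) t_f, 1 ≤ τ t := by
    intro t htI
    rw [hτ]
    have h1 : 0 < t_f - t := by linarith [htI.2]
    have : (1:ℝ) ≤ t_f / (t_f - t) := by
      rw [le_div_iff₀ h1]; linarith [htI.1]
    nlinarith [Real.log_nonneg this]
  have hμ₁1 : ∀ t ∈ Ico (0:ℝ) t_f, 1 ≤ μ₁ t := by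
    intro t htI
    rw [hμ₁]
    calc (1:ℝ) = 1 ^ h₁ := (Real.one_rpow h₁).symm
      _ ≤ τ t ^ h₁ := Real.rpow_le_rpow zero_le_one (hτ1 t htI) (by linarith)
  have hμ₁₂ : ∀ t ∈ Ico (0:ℝ) t_f, μ₁ t ≤ μ₂ t := by
    intro t htI
    rw [hμ₁, hμ₂]
    exact Real.rpow_le_rpow_of_exponent_le (hτ1 t htI) (le_of_lt hh)
  have hV₁nonneg : ∀ t, 0 ≤ V₁ t := by
    intro t; rw [hV₁]; positivity
  -- the key pointwise bound: V₁' t ≤ 2 c C₂ √(V₁ t + 1)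
  have hkey : ∀ t ∈ Ico (0:ℝ) t_f, V₁' t ≤ 2 * c * C₂ * Real.sqrt (V₁ t + 1) := by
    intro t htI
    have ha : 1 ≤ μ₁ t := hμ₁1 t htI
    have hab : μ₁ t ≤ μ₂ t := hμ₁₂ t htI
    have hb : 0 < μ₂ t := by linarith
    have hr : 0 ≤ ‖x₁ t‖ := norm_nonneg _
    have hs0 : 0 ≤ V₁ t + 1 := by linarith [hV₁nonneg t]
    have hsq : Real.sqrt (V₁ t + 1) ^ 2 = V₁ t + 1 := Real.sq_sqrt hs0
    have hmr : μ₁ t * ‖x₁ t‖ ≤ Real.sqrt (V₁ t + 1) := by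
      rw [Real.le_sqrt (by positivity) hs0, hV₁]; nlinarith
    have hx2 : ‖x₂ t‖ ≤ C₂ / μ₂ t := hx₂ t htI
    have step1 : 2 * μ₁ t ^ 2 * c * ‖x₁ t‖ * ‖x₂ t‖ ≤
        2 * μ₁ t ^ 2 * c * ‖x₁ t‖ * (C₂ / μ₂ t) := by
      apply mul_le_mul_of_nonneg_left hx2; positivity
    have step2 : 2 * μ₁ t ^ 2 * c * ‖x₁ t‖ * (C₂ / μ₂ t) ≤
        2 * c * C₂ * Real.sqrt (V₁ t + 1) := by
      rw [div_eq_mul_inv]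
      have h1 : μ₁ t * (μ₂ t)⁻¹ ≤ 1 := by
        rw [mul_inv_le_iff₀ hb]; linarith
      have hsnn : 0 ≤ Real.sqrt (V₁ t + 1) := Real.sqrt_nonneg _
      have hprod : (μ₁ t * ‖x₁ t‖) * (μ₁ t * (μ₂ t)⁻¹) ≤ Real.sqrt (V₁ t + 1) * 1 :=
        mul_le_mul hmr h1 (by positivity) hsnn
      calc 2 * μ₁ t ^ 2 * c * ‖x₁ t‖ * (C₂ * (μ₂ t)⁻¹)
          = 2 * c * C₂ * ((μ₁ t * ‖x₁ t‖) * (μ₁ t * (μ₂ t)⁻¹)) := by ring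
        _ ≤ 2 * c * C₂ * (Real.sqrt (V₁ t + 1) * 1) := by
            apply mul_le_mul_of_nonneg_left hprod; positivity
        _ = 2 * c * C₂ * Real.sqrt (V₁ t + 1) := by ring
    have hneg : -2 * k₁ * μ₁ t * V₁ t ≤ 0 := by
      have h0 := hV₁nonneg t
      nlinarith [mul_nonneg (mul_nonneg (by linarith : (0:ℝ) ≤ 2 * k₁)
        (by linarith : (0:ℝ) ≤ μ₁ t)) h0]
    calc V₁' t ≤ -2 * k₁ * μ₁ t * V₁ t + 2 * μ₁ t ^ 2 * c * ‖x₁ t‖ * ‖x₂ t‖ :=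
          hineq t htI
      _ ≤ 0 + 2 * c * C₂ * Real.sqrt (V₁ t + 1) := by
          exact add_le_add hneg (le_trans step1 step2)
      _ = 2 * c * C₂ * Real.sqrt (V₁ t + 1) := zero_add _
  -- the comparison function g t = √(V₁ t + 1) - c C₂ t is antitone on [0, t_f)
  set g : ℝ → ℝ := fun t => Real.sqrt (V₁ t + 1) - c * C₂ * t with hg
  have hgderiv : ∀ t ∈ Ico (0:ℝ) t_f,
      HasDerivAt g (1 / (2 * Real.sqrt (V₁ t + 1)) * V₁' t - c * C₂) t := by
    intro t htI
    have hs : 0 < V₁ t + 1 := by linarith [hV₁nonneg t]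
    have h1 : HasDerivAt (fun u => V₁ u + 1) (V₁' t) t := (hV₁' t htI).add_const 1
    have h2 : HasDerivAt (fun u => Real.sqrt (V₁ u + 1))
        (1 / (2 * Real.sqrt (V₁ t + 1)) * V₁' t) t :=
      (Real.hasDerivAt_sqrt (ne_of_gt hs)).comp t h1
    have h3 : HasDerivAt (fun u : ℝ => c * C₂ * u) (c * C₂) t := by
      simpa using (hasDerivAt_id t).const_mul (c * C₂)
    exact h2.sub h3
  have hanti : AntitoneOn g (Ico 0 t_f) := by
    apply antitoneOn_of_hasDerivWithinAt_nonpos (convex_Ico 0 t_f)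
    · intro t htI
      exact ((hgderiv t htI).continuousAt).continuousWithinAt
    · intro t htI
      rw [interior_Ico] at htI
      exact (hgderiv t (Ioo_subset_Ico_self htI)).hasDerivWithinAt
    · intro t htI
      rw [interior_Ico] at htI
      have htI' : t ∈ Ico (0:ℝ) t_f := Ioo_subset_Ico_self htI
      have hs : 0 < Real.sqrt (V₁ t + 1) :=
        Real.sqrt_pos.mpr (by linarith [hV₁nonneg t])
      have := hkey t htI'
      rw [div_mul_eq_mul_div, sub_nonpos, div_le_iff₀ (by positivity)]
      nlinarith
  -- hence the bound μ₁ t ‖x₁ t‖ ≤ M on [0, t_f)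
  set M : ℝ := Real.sqrt (V₁ 0 + 1) + c * C₂ * t_f with hM
  have hbound : ∀ t ∈ Ico (0:ℝ) t_f, ‖x₁ t‖ ≤ M / μ₁ t := by
    intro t htI
    have h0 : (0:ℝ) ∈ Ico (0:ℝ) t_f := ⟨le_refl 0, ht⟩
    have := hanti h0 htI htI.1
    simp only [hg, mul_zero, sub_zero] at this
    have hle : Real.sqrt (V₁ t + 1) ≤ M := by
      have : Real.sqrt (V₁ t + 1) ≤ Real.sqrt (V₁ 0 + 1) + c * C₂ * t := by linarith
      have h2 : c * C₂ * t ≤ c * C₂ * t_f := by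
        apply mul_le_mul_of_nonneg_left (le_of_lt htI.2) (by positivity)
      rw [hM]; linarith
    have ha : 1 ≤ μ₁ t := hμ₁1 t htI
    rw [le_div_iff₀ (by linarith), mul_comm]
    have hmr : μ₁ t * ‖x₁ t‖ ≤ Real.sqrt (V₁ t + 1) := by
      rw [Real.le_sqrt (by positivity) (by linarith [hV₁nonneg t]), hV₁]; nlinarith
    linarith
  -- μ₁ → ∞ as t → t_f⁻
  have hτtop : Tendsto τ (𝓝[<] t_f) atTop := by
    have h1 : Tendsto (fun t => t_f - t) (𝓝[<] t_f) (𝓝[>] 0) := by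
      apply tendsto_nhdsWithin_of_tendsto_nhds_of_eventually_within
      · have h0 : Tendsto (fun t : ℝ => t_f - t) (𝓝 t_f) (𝓝 (t_f - t_f)) :=
          (continuous_const.sub continuous_id).tendsto t_f
        rw [sub_self] at h0
        exact h0.mono_left nhdsWithin_le_nhds
      · filter_upwards [self_mem_nhdsWithin] with t ht'
        exact sub_pos.mpr (mem_Iio.mp ht')
    have h2 : Tendsto (fun t => t_f / (t_f - t)) (𝓝[<] t_f) atTop := by
      simp only [div_eq_mul_inv]
      exact (tendsto_inv_nhdsGT_zero.comp h1).const_mul_atTop ht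
    have h3 : Tendsto (fun t => Real.log (t_f / (t_f - t))) (𝓝[<] t_f) atTop :=
      Real.tendsto_log_atTop.comp h2
    have h4 : Tendsto (fun t => 1 + Real.log (t_f / (t_f - t))) (𝓝[<] t_f) atTop :=
      tendsto_atTop_add_const_left _ 1 h3
    exact h4.congr (fun t => (hτ t).symm)
  have hμ₁top : Tendsto μ₁ (𝓝[<] t_f) atTop := by
    have := (tendsto_rpow_atTop (by linarith : (0:ℝ) < h₁)).comp hτtop
    exact this.congr (fun t => (hμ₁ t).symm)
  have hMμ : Tendsto (fun t => M / μ₁ t) (𝓝[<] t_f) (𝓝 0) := by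
    simp only [div_eq_mul_inv]
    have := hμ₁top.inv_tendsto_atTop
    simpa using this.const_mul M
  -- squeeze
  have hIoo : Ioo (0:ℝ) t_f ∈ 𝓝[<] t_f := Ioo_mem_nhdsLT_of_mem ⟨ht, le_refl _⟩
  apply squeeze_zero' ?_ ?_ hMμ
  · filter_upwards with t; exact norm_nonneg _
  · filter_upwards [hIoo] with t ht'
    exact hbound t (Ioo_subset_Ico_self ht')
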